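/- Let W be an n×n real matrix, X an n×k matrix of full rank with k ≤ n − 2, and suppose there is no real eigenvalue ω of W with M_X(ω I_n − W) = 0 (and more strongly, there is no scalar α with (I_n − αW)y ∈ col(X) for all y). Then the set B = {y ∈ R^n : M_X(I_n − λW)y = 0 for some λ ∈ R} is a Lebesgue-null subset of R^n. -/

import Mathlib

open Matrix MeasureTheory

/-- The orthogonal projector onto the orthogonal complement of the column space of `X`. -/
noncomputable def MX {n k : ℕ} (X : Matrix (Fin n) (Fin k) ℝ) : Matrix (Fin n) (Fin n) ℝ :=
  1 - X * (Xᵀ * X)⁻¹ * Xᵀ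

private lemma depAux {n : ℕ} {u w : Fin n → ℝ} (hu : u ≠ 0)
    (h : ∀ i j, u i * w j = u j * w i) : ∃ c : ℝ, w = c • u := by
  obtain ⟨j₀, hj₀⟩ := Function.ne_iff.mp hu
  simp only [Pi.zero_apply] at hj₀
  refine ⟨w j₀ / u j₀, funext fun i => ?_⟩
  have h' := h j₀ i
  simp only [Pi.smul_apply, smul_eq_mul]
  field_simp
  linarith

private lemma pairInd {n : ℕ} {v : Fin 2 → (Fin n → ℝ)} (li : LinearIndependent ℝ v)
    {a b : ℝ} (h : a • v 0 + b • v 1 = 0) : a = 0 ∧ b = 0 := by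
  have key := Fintype.linearIndependent_iff.mp li ![a, b] (by
    simpa [Fin.sum_univ_two] using h)
  exact ⟨key 0, key 1⟩

/-- Under Assumption 1 (no scalar `ω` with `M_X(ω I − W) = 0`, and no scalar
`α` with `M_X(I − αW) = 0`), the set of `y` that can be perfectly fitted,
`B = {y : M_X(I − λW) y = 0 for some λ ∈ ℝ}`, is Lebesgue-null. -/
theorem stmt16 {n k : ℕ} (hkn : k + 2 ≤ n) (W : Matrix (Fin n) (Fin n) ℝ)
    (X : Matrix (Fin n) (Fin k) ℝ) (hX : X.rank = k)
    (h1 : ¬ ∃ ω : ℝ, MX X * (ω • 1 - W) = 0)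
    (h2 : ¬ ∃ α : ℝ, MX X * (1 - α • W) = 0) :
    volume {y : Fin n → ℝ | ∃ l : ℝ, (MX X).mulVec ((1 - l • W).mulVec y) = 0} = 0 := by
  obtain ⟨m, rfl⟩ : ∃ m, n = m + 1 := ⟨n - 1, by omega⟩
  set M := MX X with hM
  set N := M * W with hN
  -- two independent vectors in the kernel of `Xᵀ`
  have hfr : 2 ≤ Module.finrank ℝ (LinearMap.ker (Xᵀ.mulVecLin)) := by
    have e1 := LinearMap.finrank_range_add_finrank_ker (Xᵀ.mulVecLin)
    have e2 : Module.finrank ℝ (LinearMap.range (Xᵀ.mulVecLin)) = k := by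
      have : Xᵀ.rank = Module.finrank ℝ (LinearMap.range Xᵀ.mulVecLin) := rfl
      rw [← this, Matrix.rank_transpose, hX]
    have e3 : Module.finrank ℝ (Fin (m + 1) → ℝ) = m + 1 := by
      simp [Module.finrank_pi]
    omega
  obtain ⟨g, hg⟩ := exists_linearIndependent_of_le_finrank
    (R := ℝ) (M := ↥(LinearMap.ker Xᵀ.mulVecLin)) hfr
  set v : Fin 2 → (Fin (m + 1) → ℝ) := fun i => (g i : Fin (m + 1) → ℝ) with hv
  have li : LinearIndependent ℝ v :=
    hg.map' (LinearMap.ker Xᵀ.mulVecLin).subtype (Submodule.ker_subtype _)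
  have hker : ∀ i, Xᵀ *ᵥ v i = 0 := fun i => by
    have := (g i).2
    rwa [LinearMap.mem_ker, Matrix.mulVecLin_apply] at this
  have hMv : ∀ i, M *ᵥ v i = v i := by
    intro i
    rw [hM]
    unfold MX
    rw [Matrix.sub_mulVec, Matrix.one_mulVec]
    have : (X * (Xᵀ * X)⁻¹ * Xᵀ) *ᵥ v i = 0 := by
      rw [Matrix.mul_assoc, ← Matrix.mulVec_mulVec, ← Matrix.mulVec_mulVec, hker i,
        Matrix.mulVec_zero, Matrix.mulVec_zero]
    rw [this, sub_zero]
  -- key: some 2×2 minor of (My, Ny) is nonzero for some y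
  have key : ∃ (y : Fin (m + 1) → ℝ) (i j : Fin (m + 1)),
      (M *ᵥ y) i * (N *ᵥ y) j ≠ (M *ᵥ y) j * (N *ᵥ y) i := by
    by_contra hcon
    push_neg at hcon
    have hNv : ∀ i : Fin 2, ∃ c : ℝ, N *ᵥ v i = c • v i := by
      intro i
      refine depAux (li.ne_zero i) fun a b => ?_
      have := hcon (v i) a b
      rwa [hMv i] at this
    obtain ⟨ω₀, hω₀⟩ := hNv 0
    obtain ⟨ω₁, hω₁⟩ := hNv 1
    have hωeq : ω₁ = ω₀ := by
      by_contra hne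
      have hu0 : v 0 + v 1 ≠ 0 := by
        intro h0
        have := pairInd li (a := 1) (b := 1) (by simpa using h0)
        exact one_ne_zero this.1
      have hdep : ∀ a b, (v 0 + v 1) a * ((ω₁ - ω₀) • v 1) b
          = (v 0 + v 1) b * ((ω₁ - ω₀) • v 1) a := by
        intro a b
        have h₁ := hcon (v 0 + v 1) a b
        rw [Matrix.mulVec_add, Matrix.mulVec_add, hMv 0, hMv 1, hω₀, hω₁] at h₁
        simp only [Pi.add_apply, Pi.smul_apply, smul_eq_mul] at h₁ ⊢
        linear_combination h₁
      obtain ⟨c, hc⟩ := depAux hu0 hdep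
      have h0 : c • v 0 + (c - (ω₁ - ω₀)) • v 1 = 0 := by
        funext x
        have e0 := congrFun hc x
        simp only [Pi.add_apply, Pi.smul_apply, Pi.sub_apply, Pi.zero_apply,
          smul_eq_mul] at e0 ⊢
        ring_nf
        ring_nf at e0
        linarith
      obtain ⟨hc0, hc1⟩ := pairInd li h0
      exact hne (by linarith)
    have hmain : ∀ y, N *ᵥ y = ω₀ • (M *ᵥ y) := by
      intro y
      have hdep : ∀ (iv : Fin 2) a b,
          v iv a * (N *ᵥ y - ω₀ • (M *ᵥ y)) b
            = v iv b * (N *ᵥ y - ω₀ • (M *ᵥ y)) a := by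
        intro iv a b
        have hNviv : N *ᵥ v iv = ω₀ • v iv := by
          fin_cases iv
          · exact hω₀
          · rw [show ω₀ = ω₁ from hωeq.symm]; exact hω₁
        have hp := hcon (v iv + y) a b
        have hm := hcon (v iv - y) a b
        rw [Matrix.mulVec_add, Matrix.mulVec_add, hMv iv, hNviv] at hp
        rw [Matrix.mulVec_sub, Matrix.mulVec_sub, hMv iv, hNviv] at hm
        simp only [Pi.add_apply, Pi.sub_apply, Pi.smul_apply, smul_eq_mul] at hp hm ⊢
        linear_combination (hp - hm) / 2
      obtain ⟨c₀, hc₀⟩ := depAux (li.ne_zero 0) (hdep 0)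
      obtain ⟨c₁, hc₁⟩ := depAux (li.ne_zero 1) (hdep 1)
      have h0 : c₀ • v 0 + (-c₁) • v 1 = 0 := by
        funext x
        have e0 := congrFun hc₀ x
        have e1 := congrFun hc₁ x
        simp only [Pi.add_apply, Pi.smul_apply, Pi.sub_apply, Pi.zero_apply,
          smul_eq_mul] at e0 e1 ⊢
        linarith
      obtain ⟨hz0, _⟩ := pairInd li h0
      funext x
      have e0 := congrFun hc₀ x
      rw [hz0] at e0
      simp only [Pi.sub_apply, Pi.smul_apply, smul_eq_mul, zero_mul] at e0 ⊢
      linarith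
    have hmat : N = ω₀ • M := by
      ext a b
      have := congrFun (hmain (Pi.single b 1)) a
      simp only [Matrix.mulVec_single, Pi.smul_apply, smul_eq_mul, mul_one,
        Matrix.smul_apply, op_smul_eq_mul, Matrix.col_apply] at this ⊢
      exact this
    exact h1 ⟨ω₀, by
      rw [Matrix.mul_sub, Matrix.mul_smul, Matrix.mul_one, ← hN, hmat, sub_self]⟩
  obtain ⟨y₀, i, j, hq0⟩ := key
  set q : (Fin (m + 1) → ℝ) → ℝ :=
    fun y => (M *ᵥ y) i * (N *ᵥ y) j - (M *ᵥ y) j * (N *ᵥ y) i with hqdef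
  have hqy₀ : q y₀ ≠ 0 := sub_ne_zero.mpr hq0
  -- the bad set is contained in the zero set of q
  have hsub : {y : Fin (m + 1) → ℝ | ∃ l : ℝ, M.mulVec ((1 - l • W).mulVec y) = 0}
      ⊆ {y | q y = 0} := by
    rintro y ⟨l, hl⟩
    have hexp : M *ᵥ ((1 - l • W) *ᵥ y) = M *ᵥ y - l • (N *ᵥ y) := by
      rw [Matrix.sub_mulVec, Matrix.one_mulVec, Matrix.smul_mulVec,
        Matrix.mulVec_sub, Matrix.mulVec_smul, Matrix.mulVec_mulVec, ← hN]
    rw [hexp] at hl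
    have h' : M *ᵥ y = l • (N *ᵥ y) := sub_eq_zero.mp hl
    have ei := congrFun h' i
    have ej := congrFun h' j
    simp only [Pi.smul_apply, smul_eq_mul] at ei ej
    simp only [Set.mem_setOf_eq, hqdef, ei, ej]
    ring
  refine measure_mono_null hsub ?_
  -- continuity and measurability
  have hMc : Continuous fun y : Fin (m + 1) → ℝ => M *ᵥ y := by
    have h := M.mulVecLin.continuous_of_finiteDimensional
    have : (fun y : Fin (m + 1) → ℝ => M *ᵥ y) = ⇑M.mulVecLin := by
      funext y; rw [Matrix.mulVecLin_apply]
    rwa [this]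
  have hNc : Continuous fun y : Fin (m + 1) → ℝ => N *ᵥ y := by
    have h := N.mulVecLin.continuous_of_finiteDimensional
    have : (fun y : Fin (m + 1) → ℝ => N *ᵥ y) = ⇑N.mulVecLin := by
      funext y; rw [Matrix.mulVecLin_apply]
    rwa [this]
  have hqc : Continuous q := by
    rw [hqdef]
    exact (((continuous_apply i).comp hMc).mul ((continuous_apply j).comp hNc)).sub
      (((continuous_apply j).comp hMc).mul ((continuous_apply i).comp hNc))
  -- y₀ ≠ 0
  have hy₀ : y₀ ≠ 0 := by
    intro h0
    apply hqy₀
    rw [h0, hqdef]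
    simp [Matrix.mulVec_zero]
  obtain ⟨r, hr⟩ := Function.ne_iff.mp hy₀
  simp only [Pi.zero_apply] at hr
  -- linear change of variables sending e_r to y₀
  set L : (Fin (m + 1) → ℝ) →ₗ[ℝ] (Fin (m + 1) → ℝ) :=
    LinearMap.id + (LinearMap.proj r).smulRight (y₀ - Pi.single r 1) with hL
  have hLapp : ∀ y, L y = y + y r • (y₀ - Pi.single r 1) := fun y => rfl
  have hdet : LinearMap.det L = y₀ r := by
    rw [← LinearMap.det_toMatrix' L]
    have hLM : LinearMap.toMatrix' L
        = (1 : Matrix (Fin (m + 1)) (Fin (m + 1)) ℝ).updateCol r y₀ := by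
      ext a b
      rw [LinearMap.toMatrix'_apply]
      have hsing : (fun j' => if j' = b then (1 : ℝ) else 0) = Pi.single b 1 := by
        funext j'; simp [Pi.single_apply]
      rw [hLapp]
      simp only [Pi.add_apply, Pi.smul_apply, Pi.sub_apply, smul_eq_mul,
        Matrix.updateCol_apply]
      rcases eq_or_ne b r with rfl | hbr
      · simp [Pi.single_eq_same]
      · simp [Pi.single_apply, hbr, Matrix.one_apply]
    rw [hLM, ← Matrix.cramer_apply, Matrix.cramer_eq_adjugate_mulVec]
    simp
  have hdet0 : LinearMap.det L ≠ 0 := by rw [hdet]; exact hr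
  -- the zero set of q is null
  have hZm : MeasurableSet {y : Fin (m + 1) → ℝ | q y = 0} :=
    hqc.measurable (measurableSet_singleton 0)
  have hTzero : volume (⇑L ⁻¹' {y : Fin (m + 1) → ℝ | q y = 0}) = 0 := by
    set e := MeasurableEquiv.piFinSuccAbove (fun _ : Fin (m + 1) => ℝ) r with he
    have hp := volume_preserving_piFinSuccAbove (fun _ : Fin (m + 1) => ℝ) r
    set T : Set (Fin (m + 1) → ℝ) := ⇑L ⁻¹' {y | q y = 0} with hT
    have hTm : MeasurableSet T :=
      (hqc.comp L.continuous_of_finiteDimensional).measurable (measurableSet_singleton 0)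
    set S : Set (ℝ × (Fin m → ℝ)) := ⇑e.symm ⁻¹' T with hS
    have hSm : MeasurableSet S := e.symm.measurable hTm
    have hTS : T = ⇑e ⁻¹' S := by
      rw [hS, Set.preimage_preimage]
      simp only [MeasurableEquiv.symm_apply_apply]
      rfl
    rw [hTS, hp.measure_preimage hSm.nullMeasurableSet]
    rw [Measure.volume_eq_prod, Measure.prod_apply_symm hSm]
    have hLpt : ∀ (t : ℝ) (z : Fin m → ℝ),
        L (r.insertNth t z) = r.insertNth 0 z + t • y₀ := by
      intro t z
      rw [hLapp, Fin.insertNth_apply_same]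
      funext x
      simp only [Pi.add_apply, Pi.smul_apply, Pi.sub_apply, smul_eq_mul]
      rcases eq_or_ne x r with rfl | hx
      · rw [Fin.insertNth_apply_same, Fin.insertNth_apply_same, Pi.single_eq_same]
        ring
      · obtain ⟨w, rfl⟩ := Fin.exists_succAbove_eq hx
        rw [Fin.insertNth_apply_succAbove, Fin.insertNth_apply_succAbove,
          Pi.single_eq_of_ne (r.succAbove_ne w)]
        ring
    have hslice : ∀ z : Fin m → ℝ, volume ((fun t : ℝ => (t, z)) ⁻¹' S) = 0 := by
      intro z
      have hset : ((fun t : ℝ => (t, z)) ⁻¹' S)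
          = {t : ℝ | q (r.insertNth 0 z + t • y₀) = 0} := by
        ext t
        simp only [hS, hT, Set.mem_preimage, Set.mem_setOf_eq, he,
          MeasurableEquiv.piFinSuccAbove_symm_apply]
        rw [show (Fin.insertNthEquiv (fun _ => ℝ) r) (t, z) = r.insertNth t z from rfl,
          hLpt t z]
      rw [hset]
      set c : Fin (m + 1) → ℝ := r.insertNth 0 z with hc
      set A : ℝ := (M *ᵥ c) i * (N *ᵥ c) j - (M *ᵥ c) j * (N *ᵥ c) i with hA
      set B : ℝ := (M *ᵥ c) i * (N *ᵥ y₀) j + (M *ᵥ y₀) i * (N *ᵥ c) j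
            - (M *ᵥ c) j * (N *ᵥ y₀) i - (M *ᵥ y₀) j * (N *ᵥ c) i with hB
      set D : ℝ := (M *ᵥ y₀) i * (N *ᵥ y₀) j - (M *ᵥ y₀) j * (N *ᵥ y₀) i with hD
      have hD0 : D ≠ 0 := by rw [hD]; exact sub_ne_zero.mpr hq0
      set P : Polynomial ℝ := Polynomial.C A + Polynomial.C B * Polynomial.X ^ 1
        + Polynomial.C D * Polynomial.X ^ 2 with hP
      have hPne : P ≠ 0 := by
        intro h0
        have hcoeff : P.coeff 2 = D := by
          rw [hP]
          simp [Polynomial.coeff_add, Polynomial.coeff_C,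
            Polynomial.coeff_C_mul, Polynomial.coeff_X_pow]
        rw [h0, Polynomial.coeff_zero] at hcoeff
        exact hD0 hcoeff.symm
      have hsub2 : {t : ℝ | q (c + t • y₀) = 0} ⊆ {t | P.IsRoot t} := by
        intro t ht
        simp only [Set.mem_setOf_eq] at ht ⊢
        replace ht : (M *ᵥ (c + t • y₀)) i * (N *ᵥ (c + t • y₀)) j
            - (M *ᵥ (c + t • y₀)) j * (N *ᵥ (c + t • y₀)) i = 0 := ht
        rw [Matrix.mulVec_add, Matrix.mulVec_add, Matrix.mulVec_smul,
          Matrix.mulVec_smul] at ht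
        simp only [Pi.add_apply, Pi.smul_apply, smul_eq_mul] at ht
        rw [Polynomial.IsRoot.def, hP]
        simp only [Polynomial.eval_add, Polynomial.eval_mul, Polynomial.eval_C,
          Polynomial.eval_X, Polynomial.eval_pow, hA, hB, hD]
        linear_combination ht
      exact ((Polynomial.finite_setOf_isRoot hPne).subset hsub2).measure_zero _
    simp only [hslice]
    exact lintegral_zero
  have hpre := Measure.addHaar_preimage_linearMap (μ := volume) hdet0
    {y : Fin (m + 1) → ℝ | q y = 0}
  rw [hTzero] at hpre
  rcases mul_eq_zero.mp hpre.symm with h | h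
  · exfalso
    rw [ENNReal.ofReal_eq_zero] at h
    have : |(LinearMap.det L)⁻¹| = 0 := le_antisymm h (abs_nonneg _)
    rw [abs_eq_zero, inv_eq_zero, hdet] at this
    exact hr this
  · exact h
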